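/- Let Λ = HahnSeries ℝ ℂ be the Novikov field and let M be an m × m' matrix with entries in Λ[z^ℝ] = AddMonoidAlgebra Λ ℝ. For t ∈ ℝ, let M_t denote the matrix over Λ obtained by applying the specialization at z = T^t to every entry of M. Then there exist r₀ ∈ ℕ and a finite set F ⊆ ℝ such that Matrix.rank M_t = r₀ for every t ∉ F, and Matrix.rank M_t ≤ r₀ for every t ∈ ℝ. In other words, the rank of the specialized matrix is constant in t with finitely many exceptions, where it can only drop. -/

import Mathlib

open HahnSeries

/-- The Novikov field `Λ = ℂ((T^ℝ))`, realized as Hahn series. -/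
local notation "Λ" => HahnSeries ℝ ℂ

/-- The specialization of a finite formal sum `f = Σ_r f(r)·z^r ∈ Λ[z^ℝ]` at `z = T^t`:
`f(T^t) = Σ_{r ∈ supp f} f(r)·T^{t·r} ∈ Λ`. -/
noncomputable def specializeAt (t : ℝ) (f : AddMonoidAlgebra Λ ℝ) : Λ :=
  ∑ r ∈ f.coeff.support, f.coeff r * HahnSeries.single (t * r) (1 : ℂ)

/-! ### Specialization as a ring homomorphism -/

/-- The monoid hom sending `r` to `T^{t r}`. -/
noncomputable def expHom (t : ℝ) : Multiplicative ℝ →* Λ where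
  toFun x := HahnSeries.single (t * x.toAdd) (1 : ℂ)
  map_one' := by
    show HahnSeries.single (t * (0:ℝ)) 1 = 1
    rw [mul_zero]
    exact HahnSeries.single_zero_one
  map_mul' x y := by
    show HahnSeries.single (t * (x.toAdd + y.toAdd)) 1 = _
    rw [mul_add, HahnSeries.single_mul_single, one_mul]

/-- Specialization as an algebra hom. -/
noncomputable def specializeAtHom (t : ℝ) : AddMonoidAlgebra Λ ℝ →ₐ[Λ] Λ :=
  AddMonoidAlgebra.lift Λ Λ ℝ (expHom t)

theorem specializeAt_eq (t : ℝ) (f : AddMonoidAlgebra Λ ℝ) :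
    specializeAt t f = specializeAtHom t f := by
  rw [specializeAtHom, AddMonoidAlgebra.lift_apply]
  rw [specializeAt, Finsupp.sum]
  refine Finset.sum_congr rfl fun r _ => ?_
  rw [smul_eq_mul]
  rfl

theorem specializeAt_det {k : ℕ} (t : ℝ) (A : Matrix (Fin k) (Fin k) (AddMonoidAlgebra Λ ℝ)) :
    (A.map (specializeAt t)).det = specializeAt t A.det := by
  classical
  have h2 : specializeAt t = ⇑(specializeAtHom t) := funext fun x => specializeAt_eq t x
  rw [h2, Matrix.det_apply, Matrix.det_apply, map_sum]
  refine Finset.sum_congr rfl fun σ _ => ?_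
  rw [Units.smul_def, Units.smul_def, map_zsmul, map_prod]
  congr 1

theorem specializeAt_zero (t : ℝ) : specializeAt t (0 : AddMonoidAlgebra Λ ℝ) = 0 := by
  simp [specializeAt]

/-! ### The zero set of a specialization is finite -/

theorem specializeAt_ne_zero_of_inj (t : ℝ) (f : AddMonoidAlgebra Λ ℝ) (hf : f ≠ 0)
    (hinj : ∀ r ∈ f.coeff.support, ∀ r' ∈ f.coeff.support,
      (f.coeff r).order + t * r = (f.coeff r').order + t * r' → r = r') :
    specializeAt t f ≠ 0 := by
  classical
  set S := f.coeff.support with hS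
  have hSne : S.Nonempty := Finsupp.support_nonempty_iff.2 (AddMonoidAlgebra.coeff_eq_zero.not.2 hf)
  set g : ℝ → ℝ := fun r => (f.coeff r).order + t * r with hg
  obtain ⟨r₀, hr₀S, hmin⟩ := S.exists_min_image g hSne
  intro h0
  have hc : (specializeAt t f).coeff (g r₀) = 0 := by rw [h0]; simp
  rw [specializeAt] at hc
  rw [show (∑ r ∈ f.coeff.support, f.coeff r * HahnSeries.single (t * r) (1:ℂ)).coeff (g r₀)
      = ∑ r ∈ f.coeff.support, (f.coeff r * HahnSeries.single (t * r) (1:ℂ)).coeff (g r₀) from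
    map_sum (HahnSeries.coeff.addMonoidHom (g r₀)) _ _] at hc
  have hterm : ∀ r ∈ S, (f.coeff r * HahnSeries.single (t * r) (1:ℂ)).coeff (g r₀)
      = if r = r₀ then (f.coeff r₀).coeff ((f.coeff r₀).order) else 0 := by
    intro r hrS
    have hfr : f.coeff r ≠ 0 := Finsupp.mem_support_iff.1 hrS
    have key : (f.coeff r * HahnSeries.single (t * r) (1:ℂ)).coeff ((g r₀ - t * r) + t * r)
        = (f.coeff r).coeff (g r₀ - t * r) * 1 := HahnSeries.coeff_mul_single_add
    rw [sub_add_cancel, mul_one] at key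
    by_cases hrr : r = r₀
    · subst hrr
      simp only [if_pos rfl]
      rw [key]
      congr 1
      simp [hg]
    · simp only [if_neg hrr]
      rw [key]
      apply HahnSeries.coeff_eq_zero_of_lt_order
      have hlt : g r₀ < g r := by
        rcases lt_or_eq_of_le (hmin r hrS) with h | h
        · exact h
        · exact absurd (hinj r₀ hr₀S r hrS h) (Ne.symm hrr)
      have : g r₀ - t * r < (f.coeff r).order := by
        have := hlt
        simp only [hg] at this ⊢
        linarith
      exact this
  rw [Finset.sum_congr rfl hterm] at hc
  rw [Finset.sum_ite_eq' S r₀ (fun _ => (f.coeff r₀).coeff ((f.coeff r₀).order))] at hc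
  rw [if_pos hr₀S] at hc
  exact HahnSeries.coeff_order_eq_zero.not.2 (Finsupp.mem_support_iff.1 hr₀S) hc

theorem finite_bad_set (f : AddMonoidAlgebra Λ ℝ) (hf : f ≠ 0) :
    {t : ℝ | specializeAt t f = 0}.Finite := by
  classical
  have hsub : {t : ℝ | specializeAt t f = 0} ⊆
      ⋃ p ∈ (f.coeff.support ×ˢ f.coeff.support : Finset (ℝ × ℝ)),
        {t : ℝ | p.1 ≠ p.2 ∧ (f.coeff p.1).order + t * p.1 = (f.coeff p.2).order + t * p.2} := by
    intro t ht
    simp only [Set.mem_setOf_eq] at ht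
    by_contra hcon
    apply specializeAt_ne_zero_of_inj t f hf ?_ ht
    intro r hr r' hr' heq
    by_contra hne
    apply hcon
    simp only [Set.mem_iUnion]
    exact ⟨(r, r'), Finset.mem_product.2 ⟨hr, hr'⟩, hne, heq⟩
  refine Set.Finite.subset (Set.Finite.biUnion (Finset.finite_toSet _) fun p _ => ?_) hsub
  rcases eq_or_ne p.1 p.2 with h | h
  · simp [h]
  · have : {t : ℝ | p.1 ≠ p.2 ∧ (f.coeff p.1).order + t * p.1 = (f.coeff p.2).order + t * p.2} ⊆
        {((f.coeff p.2).order - (f.coeff p.1).order) / (p.1 - p.2)} := by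
      intro t ⟨_, heq⟩
      have hd : p.1 - p.2 ≠ 0 := sub_ne_zero.2 h
      simp only [Set.mem_singleton_iff]
      field_simp
      linarith
    exact Set.Finite.subset (Set.finite_singleton _) this

/-! ### Rank and minors over a field -/

section RankMinors
open Matrix
variable {K : Type*} [Field K]

theorem rank_submatrix_le'' {a b k l : ℕ} (A : Matrix (Fin a) (Fin b) K)
    (f : Fin k → Fin a) (g : Fin l → Fin b) : (A.submatrix f g).rank ≤ A.rank := by
  classical
  have h1 : ((1 : Matrix (Fin a) (Fin a) K).submatrix f ⇑(Equiv.refl (Fin a))) * A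
      = A.submatrix f id := by
    rw [Matrix.one_submatrix_mul]
    rfl
  have h2 : (A.submatrix f id) * ((1 : Matrix (Fin b) (Fin b) K).submatrix
      ⇑(Equiv.refl (Fin b)) g) = A.submatrix f g := by
    rw [Matrix.mul_submatrix_one]
    simp [Matrix.submatrix_submatrix]
  calc (A.submatrix f g).rank
      = ((((1 : Matrix (Fin a) (Fin a) K).submatrix f ⇑(Equiv.refl (Fin a))) * A)
        * ((1 : Matrix (Fin b) (Fin b) K).submatrix ⇑(Equiv.refl (Fin b)) g)).rank := by
        rw [h1, h2]
    _ ≤ (((1 : Matrix (Fin a) (Fin a) K).submatrix f ⇑(Equiv.refl (Fin a))) * A).rank :=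
        Matrix.rank_mul_le_left _ _
    _ ≤ A.rank := Matrix.rank_mul_le_right _ _

/-- If a `k×k` minor has nonzero determinant, the rank is at least `k`. -/
theorem le_rank_of_minor {a b k : ℕ} (A : Matrix (Fin a) (Fin b) K)
    (f : Fin k → Fin a) (g : Fin k → Fin b) (h : (A.submatrix f g).det ≠ 0) :
    k ≤ A.rank := by
  classical
  have hu : IsUnit (A.submatrix f g) :=
    (Matrix.isUnit_iff_isUnit_det _).2 (isUnit_iff_ne_zero.2 h)
  have := Matrix.rank_of_isUnit _ hu
  calc k = Fintype.card (Fin k) := (Fintype.card_fin k).symm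
    _ = (A.submatrix f g).rank := this.symm
    _ ≤ A.rank := rank_submatrix_le'' A f g

/-- Row extraction: there are `rank` rows that are linearly independent. -/
theorem exists_rows_linearIndependent {a b : ℕ} (A : Matrix (Fin a) (Fin b) K) :
    ∃ f : Fin A.rank → Fin a, Function.Injective f ∧ LinearIndependent K (A ∘ f) := by
  classical
  obtain ⟨s, hs_sub, hs_span, hs_li⟩ := exists_linearIndependent K (Set.range A)
  have hsfin : s.Finite := (Set.finite_range A).subset hs_sub
  have : Fintype s := hsfin.fintype
  have hcard : Module.finrank K (Submodule.span K s) = s.toFinset.card :=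
    finrank_span_set_eq_card hs_li
  have hrank : A.rank = s.toFinset.card := by
    rw [Matrix.rank_eq_finrank_span_row, show A.row = A from rfl, ← hs_span, hcard]
  have hidx : ∀ x : s, ∃ i : Fin a, A i = (x : Fin b → K) := fun x => hs_sub x.2
  choose idx hidx_eq using hidx
  have hrank' : A.rank = Fintype.card s := by
    rw [hrank, Set.toFinset_card]
  have e : Fin A.rank ≃ s := (finCongr hrank').trans (Fintype.equivFin s).symm
  refine ⟨fun i => idx (e i), ?_, ?_⟩
  · intro i j hij
    simp only at hij
    have : (e i : Fin b → K) = (e j : Fin b → K) := by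
      rw [← hidx_eq (e i), ← hidx_eq (e j), hij]
    exact e.injective (Subtype.ext this)
  · have : A ∘ (fun i => idx (e i)) = (fun x : s => (x : Fin b → K)) ∘ e := by
      funext i
      exact hidx_eq (e i)
    rw [this]
    exact hs_li.comp e e.injective

/-- Square matrix with linearly independent rows has nonzero determinant. -/
theorem det_ne_zero_of_rows_linearIndependent {k : ℕ} (C : Matrix (Fin k) (Fin k) K)
    (h : LinearIndependent K C) : C.det ≠ 0 := by
  classical
  rw [Ne, ← Matrix.exists_vecMul_eq_zero_iff]
  rintro ⟨v, hv, hvC⟩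
  apply hv
  have := Fintype.linearIndependent_iff.1 h v ?_
  · funext i; exact this i
  · funext j
    have h0 : (v ᵥ* C) j = 0 := by rw [hvC]; rfl
    rw [Pi.zero_apply, ← h0]
    simp [Matrix.vecMul, dotProduct, Finset.sum_apply, mul_comm]

/-- There is a nonzero minor of size equal to the rank. -/
theorem exists_minor_det_ne_zero {a b r : ℕ} (A : Matrix (Fin a) (Fin b) K)
    (hr : A.rank = r) :
    ∃ (f : Fin r → Fin a) (g : Fin r → Fin b),
      Function.Injective f ∧ Function.Injective g ∧ (A.submatrix f g).det ≠ 0 := by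
  classical
  subst hr
  have hcols := exists_rows_linearIndependent Aᵀ
  rw [Matrix.rank_transpose] at hcols
  obtain ⟨g, hg_inj, hg_li⟩ := hcols
  set B := A.submatrix id g with hB
  have hBT : Bᵀ = Aᵀ.submatrix g id := by
    ext i j; rfl
  have hBT_li : LinearIndependent K Bᵀ := by
    rw [hBT]
    exact hg_li.comp id fun x y h => h
  have hB_rank : B.rank = A.rank := by
    rw [← Matrix.rank_transpose B, LinearIndependent.rank_matrix (M := Bᵀ) hBT_li, Fintype.card_fin]
  have hrows := exists_rows_linearIndependent B
  rw [hB_rank] at hrows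
  obtain ⟨f, hf_inj, hf_li⟩ := hrows
  refine ⟨f, g, hf_inj, hg_inj, ?_⟩
  have hsub : A.submatrix f g = B.submatrix f id := by
    ext i j; rfl
  rw [hsub]
  apply det_ne_zero_of_rows_linearIndependent
  have : (B.submatrix f id : Matrix (Fin A.rank) (Fin A.rank) K) = B ∘ f := by
    ext i j; rfl
  rw [this]
  exact hf_li

end RankMinors

/-- **Semicontinuity of rank of a matrix over `Λ[z^ℝ]` specialized along the real line.**
For a matrix `M` over `Λ[z^ℝ]`, the rank of the specialized matrix `M_t` (over the field
`Λ`) is constant, equal to some `r₀`, for all `t` outside a finite set, and is `≤ r₀`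
everywhere. -/
theorem rank_specialized_matrix_constant_cofinite (m m' : ℕ)
    (M : Matrix (Fin m) (Fin m') (AddMonoidAlgebra Λ ℝ)) :
    ∃ (r₀ : ℕ) (F : Set ℝ), F.Finite ∧
      (∀ t : ℝ, t ∉ F → (M.map (specializeAt t)).rank = r₀) ∧
      (∀ t : ℝ, (M.map (specializeAt t)).rank ≤ r₀) := by
  classical
  set P : ℕ → Prop := fun k => ∃ (f : Fin k → Fin m) (g : Fin k → Fin m'),
    Function.Injective f ∧ Function.Injective g ∧ (M.submatrix f g).det ≠ 0 with hPdef
  have hP0 : P 0 := ⟨Fin.elim0, Fin.elim0, fun x => x.elim0, fun x => x.elim0, by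
    rw [Matrix.det_fin_zero]; exact one_ne_zero⟩
  set r₀ := Nat.findGreatest P m with hr₀
  have hr₀le : r₀ ≤ m := Nat.findGreatest_le m
  have hPr₀ : P r₀ := Nat.findGreatest_spec (Nat.zero_le m) hP0
  -- the exceptional set
  set σ := (Σ k : Fin (m+1), (Fin (k : ℕ) → Fin m) × (Fin (k : ℕ) → Fin m')) with hσ
  set d : σ → AddMonoidAlgebra Λ ℝ := fun i => (M.submatrix i.2.1 i.2.2).det with hd
  set F : Set ℝ := ⋃ i : σ, {t | d i ≠ 0 ∧ specializeAt t (d i) = 0} with hF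
  have hFfin : F.Finite := by
    apply Set.finite_iUnion
    intro i
    by_cases h : d i = 0
    · have : {t | d i ≠ 0 ∧ specializeAt t (d i) = 0} = ∅ := by
        ext t; simp [h]
      rw [this]; exact Set.finite_empty
    · exact (finite_bad_set _ h).subset fun t ht => ht.2
  -- commuting map with minors
  have hmap : ∀ (t : ℝ) {k : ℕ} (f : Fin k → Fin m) (g : Fin k → Fin m'),
      ((M.map (specializeAt t)).submatrix f g).det
        = specializeAt t ((M.submatrix f g).det) := by
    intro t k f g
    have h1 : (M.map (specializeAt t)).submatrix f g
        = (M.submatrix f g).map (specializeAt t) := by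
      ext i j; rfl
    rw [h1, specializeAt_det]
  -- upper bound everywhere
  have hub : ∀ t : ℝ, (M.map (specializeAt t)).rank ≤ r₀ := by
    intro t
    obtain ⟨f, g, hf, hg, hdet⟩ :=
      exists_minor_det_ne_zero (M.map (specializeAt t)) rfl
    rw [hmap t f g] at hdet
    have hPs : P (M.map (specializeAt t)).rank := by
      refine ⟨f, g, hf, hg, ?_⟩
      intro h0
      apply hdet
      rw [h0]
      exact specializeAt_zero t
    have hsle : (M.map (specializeAt t)).rank ≤ m := by
      have := Matrix.rank_le_card_height (M.map (specializeAt t))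
      simpa using this
    exact Nat.le_findGreatest hsle hPs
  refine ⟨r₀, F, hFfin, ?_, hub⟩
  intro t htF
  refine le_antisymm (hub t) ?_
  obtain ⟨f₀, g₀, hf₀, hg₀, hd₀⟩ := hPr₀
  have hi : ∀ i : σ, ¬ (d i ≠ 0 ∧ specializeAt t (d i) = 0) := by
    intro i hcon
    exact htF (Set.mem_iUnion.2 ⟨i, hcon⟩)
  have hr₀lt : r₀ < m + 1 := Nat.lt_succ_of_le hr₀le
  set i₀ : σ := ⟨⟨r₀, hr₀lt⟩, f₀, g₀⟩ with hi₀
  have hdi₀ : d i₀ = (M.submatrix f₀ g₀).det := rfl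
  have hspec : specializeAt t ((M.submatrix f₀ g₀).det) ≠ 0 := by
    intro h0
    exact hi i₀ ⟨by rw [hdi₀]; exact hd₀, by rw [hdi₀]; exact h0⟩
  have hdet : (((M.map (specializeAt t)).submatrix f₀ g₀).det) ≠ 0 := by
    rw [hmap t f₀ g₀]
    exact hspec
  exact le_rank_of_minor _ f₀ g₀ hdet
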